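/- Let n ≥ 1 and let λ : {1,…,n} → ℤ. Then the following are equivalent: (a) there exist η : {1,…,n} → ℤ and a permutation w of {1,…,n} with w² = id such that λ_i = η_i + η_{w(i)} for all i; (b) for every odd integer m, the number of indices i with λ_i = m is even. -/
import Mathlib

open Finset

lemma aux_invol {n : ℕ} (lam : Fin n → ℤ) :
    ∀ s : Finset (Fin n),
      (∀ m : ℤ, Odd m → Even ((s.filter (fun i => lam i = m)).card)) →
      ∃ w : Equiv.Perm (Fin n), w * w = 1 ∧ (∀ i, i ∉ s → w i = i) ∧
        (∀ i, lam (w i) = lam i) ∧ (∀ i ∈ s, w i = i → Even (lam i)) := by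
  intro s
  induction s using Finset.strongInduction with
  | _ s ih =>
    intro hs
    by_cases h : ∃ a ∈ s, Odd (lam a)
    · obtain ⟨a, ha, hodd⟩ := h
      have h2 : Even ((s.filter (fun i => lam i = lam a)).card) := hs _ hodd
      have hamem : a ∈ s.filter (fun i => lam i = lam a) := by simp [ha]
      have hcard : 1 < (s.filter (fun i => lam i = lam a)).card := by
        obtain ⟨k, hk⟩ := h2
        have : 0 < (s.filter (fun i => lam i = lam a)).card := card_pos.mpr ⟨a, hamem⟩
        omega
      obtain ⟨b, hbmem, hba⟩ := Finset.exists_mem_ne hcard a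
      have hb : b ∈ s := (mem_filter.mp hbmem).1
      have hlb : lam b = lam a := (mem_filter.mp hbmem).2
      set t := s \ {a, b} with ht
      have hts : t ⊂ s := by
        refine Finset.sdiff_ssubset ?_ (by simp)
        intro x hx; simp at hx; rcases hx with rfl | rfl <;> assumption
      have hcount : ∀ m : ℤ, Odd m → Even ((t.filter (fun i => lam i = m)).card) := by
        intro m hm
        by_cases hma : m = lam a
        · subst hma
          have heq : t.filter (fun i => lam i = lam a) =
              ((s.filter (fun i => lam i = lam a)).erase a).erase b := by
            ext x
            simp [ht, Finset.mem_sdiff, Finset.mem_erase, and_comm, and_assoc]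
            tauto
          have hbmem' : b ∈ (s.filter (fun i => lam i = lam a)).erase a :=
            Finset.mem_erase.mpr ⟨hba, hbmem⟩
          rw [heq, Finset.card_erase_of_mem hbmem', Finset.card_erase_of_mem hamem]
          obtain ⟨k, hk⟩ := h2
          have h1 : 1 < (s.filter (fun i => lam i = lam a)).card := hcard
          rw [Nat.even_sub (by omega), Nat.even_sub (by omega)]
          simp [Nat.even_iff, hk]
        · have heq : t.filter (fun i => lam i = m) = s.filter (fun i => lam i = m) := by
            ext x
            simp only [ht, Finset.mem_filter, Finset.mem_sdiff, Finset.mem_insert,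
              Finset.mem_singleton]
            constructor
            · rintro ⟨⟨hx, -⟩, hxm⟩; exact ⟨hx, hxm⟩
            · rintro ⟨hx, hxm⟩
              refine ⟨⟨hx, ?_⟩, hxm⟩
              rintro (rfl | rfl)
              · exact hma hxm.symm
              · exact hma (hlb ▸ hxm.symm)
          rw [heq]; exact hs m hm
      obtain ⟨w', hw'2, hw'fix, hw'lam, hw'even⟩ := ih t hts hcount
      have hw'a : w' a = a := hw'fix a (by simp [ht])
      have hw'b : w' b = b := hw'fix b (by simp [ht])
      have hswaplam : ∀ j, lam (Equiv.swap a b j) = lam j := by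
        intro j
        rcases eq_or_ne j a with rfl | hja
        · rw [Equiv.swap_apply_left]; exact hlb
        rcases eq_or_ne j b with rfl | hjb
        · rw [Equiv.swap_apply_right]; exact hlb.symm
        · rw [Equiv.swap_apply_of_ne_of_ne hja hjb]
      refine ⟨Equiv.swap a b * w', ?_, ?_, ?_, ?_⟩
      · have hcomm : w' * Equiv.swap a b = Equiv.swap a b * w' := by
          rw [Equiv.mul_swap_eq_swap_mul, hw'a, hw'b]
        calc Equiv.swap a b * w' * (Equiv.swap a b * w')
            = Equiv.swap a b * (w' * Equiv.swap a b) * w' := by group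
          _ = Equiv.swap a b * (Equiv.swap a b * w') * w' := by rw [hcomm]
          _ = (Equiv.swap a b * Equiv.swap a b) * (w' * w') := by group
          _ = 1 := by rw [Equiv.swap_mul_self, hw'2, one_mul]
      · intro i hi
        have hit : i ∉ t := fun hmem => hi (Finset.mem_sdiff.mp hmem).1
        have hia : i ≠ a := fun h => hi (h ▸ ha)
        have hib : i ≠ b := fun h => hi (h ▸ hb)
        simp [Equiv.Perm.mul_apply, hw'fix i hit, Equiv.swap_apply_of_ne_of_ne hia hib]
      · intro i
        simp only [Equiv.Perm.mul_apply]
        rw [hswaplam, hw'lam]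
      · intro i hi hfix
        have hwmem : ∀ j, j ∈ t → w' j ∈ t := by
          intro j hj
          by_contra hout
          have := hw'fix _ hout
          have : w' (w' j) = w' j := by rw [this]
          have hjj : w' (w' j) = j := by
            have := congrArg (fun σ : Equiv.Perm (Fin n) => σ j) hw'2
            simpa [Equiv.Perm.mul_apply] using this
          rw [hjj] at this
          exact hout (this ▸ hj)
        by_cases hia : i = a
        · exfalso
          rw [hia] at hfix
          have hab : (Equiv.swap a b * w') a = b := by
            simp [Equiv.Perm.mul_apply, hw'a]
          rw [hfix] at hab
          exact hba hab.symm
        by_cases hib : i = b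
        · exfalso
          rw [hib] at hfix
          have hab : (Equiv.swap a b * w') b = a := by
            simp [Equiv.Perm.mul_apply, hw'b]
          rw [hfix] at hab
          exact hba hab
        · have hit : i ∈ t := by simp [ht, hi, hia, hib]
          have hwt : w' i ∈ t := hwmem i hit
          have hwa : w' i ≠ a := fun h => by simp [ht, h] at hwt
          have hwb : w' i ≠ b := fun h => by simp [ht, h] at hwt
          have : (Equiv.swap a b * w') i = w' i := by
            simp [Equiv.Perm.mul_apply, Equiv.swap_apply_of_ne_of_ne hwa hwb]
          rw [this] at hfix
          exact hw'even i hit hfix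
    · push_neg at h
      refine ⟨1, by group, fun i _ => rfl, fun i => rfl, fun i hi _ => ?_⟩
      exact Int.not_odd_iff_even.mp (h i hi)

theorem coweight_eq_eta_add_involution_eta_iff
    (n : ℕ) (hn : 1 ≤ n) (lam : Fin n → ℤ) :
    (∃ (η : Fin n → ℤ) (w : Equiv.Perm (Fin n)),
        w * w = 1 ∧ ∀ i, lam i = η i + η (w i)) ↔
      ∀ m : ℤ, Odd m →
        Even (Finset.univ.filter (fun i : Fin n => lam i = m)).card := by
  constructor
  · rintro ⟨η, w, hw2, hsum⟩ m hm
    have hww : ∀ i, w (w i) = i := by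
      intro i
      have := congrArg (fun σ : Equiv.Perm (Fin n) => σ i) hw2
      simpa [Equiv.Perm.mul_apply] using this
    have hlw : ∀ i, lam (w i) = lam i := by
      intro i
      rw [hsum (w i), hww, hsum i, add_comm]
    set S := Finset.univ.filter (fun i : Fin n => lam i = m) with hS
    have hnofix : ∀ i ∈ S, w i ≠ i := by
      intro i hiS hfix
      have hlam : lam i = m := (Finset.mem_filter.mp hiS).2
      have : lam i = η i + η i := by rw [hsum i, hfix]
      rw [hlam] at this
      exact ((Int.not_odd_iff_even.mpr ⟨η i, this⟩)) hm
    have hwS : ∀ i ∈ S, w i ∈ S := by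
      intro i hiS
      have hlam : lam i = m := (Finset.mem_filter.mp hiS).2
      simp [hS, Finset.mem_filter, hlw i, hlam]
    set t := S.filter (fun i => i < w i) with htdef
    set u := S.filter (fun i => w i < i) with hudef
    have hcards : t.card = u.card := by
      apply Finset.card_bij' (fun i _ => w i) (fun i _ => w i)
      · intro i hi
        obtain ⟨hiS, hlt⟩ := Finset.mem_filter.mp hi
        exact Finset.mem_filter.mpr ⟨hwS i hiS, by rw [hww]; exact hlt⟩
      · intro i hi
        obtain ⟨hiS, hlt⟩ := Finset.mem_filter.mp hi
        exact Finset.mem_filter.mpr ⟨hwS i hiS, by rw [hww]; exact hlt⟩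
      · intro i hi; exact hww i
      · intro i hi; exact hww i
    have hunion : S = t ∪ u := by
      ext i
      simp only [htdef, hudef, Finset.mem_union, Finset.mem_filter]
      constructor
      · intro hi
        rcases lt_trichotomy i (w i) with hlt | heq | hgt
        · exact Or.inl ⟨hi, hlt⟩
        · exact absurd heq.symm (hnofix i hi)
        · exact Or.inr ⟨hi, hgt⟩
      · rintro (⟨hi, -⟩ | ⟨hi, -⟩) <;> exact hi
    have hdisj : Disjoint t u := by
      rw [Finset.disjoint_filter]
      intro i _ hlt hgt
      exact absurd hgt (not_lt.mpr hlt.le)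
    rw [hunion, Finset.card_union_of_disjoint hdisj, hcards]
    exact ⟨u.card, rfl⟩
  · intro hcount
    obtain ⟨w, hw2, -, hlw, heven⟩ := aux_invol lam Finset.univ hcount
    have hww : ∀ i, w (w i) = i := by
      intro i
      have := congrArg (fun σ : Equiv.Perm (Fin n) => σ i) hw2
      simpa [Equiv.Perm.mul_apply] using this
    refine ⟨fun i => if w i = i then lam i / 2 else if i < w i then 0 else lam i, w, hw2, ?_⟩
    intro i
    by_cases hfix : w i = i
    · obtain ⟨k, hk⟩ := heven i (Finset.mem_univ i) hfix
      simp only [hfix, if_pos rfl]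
      simp only [hfix, hk, eq_self_iff_true, if_true]
      omega
    · have hfix2 : ¬ (w (w i) = w i) := by rw [hww]; exact fun h => hfix h.symm
      rcases lt_or_gt_of_ne (fun h : i = w i => hfix h.symm) with hlt | hgt
      · have : ¬ (w i < w (w i)) := by rw [hww]; exact not_lt.mpr hlt.le
        simp only [if_neg hfix, if_pos hlt, if_neg hfix2, if_neg this]
        rw [hlw i, zero_add]
      · have : w i < w (w i) := by rw [hww]; exact hgt
        simp only [if_neg hfix, if_neg (not_lt.mpr hgt.le), if_neg hfix2, if_pos this]
        ring
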